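/- Let α be a composition of length k and fix n ≥ k. Let P_α be the set of n-tuples of nonnegative integers obtained as componentwise maxima of nonempty collections of n-tuples whose positive part equals α, ordered componentwise, with an adjoined bottom element 0̂. Then the poset P̂_α = P_α ∪ {0̂} is a lattice. -/

import Mathlib

open MvPolynomial Finset
open scoped Classical

/-- The positive part of a weak composition: delete the zero entries. -/
def posList (l : List ℕ) : List ℕ := l.filter (fun x => x ≠ 0)

/-- `S_α`: length-`n` tuples of nonnegative integers whose positive part is `α`. -/
def Sset (α : List ℕ) (n : ℕ) : Set (Fin n → ℕ) :=
  {b | posList (List.ofFn b) = α}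

/-- `P_α`: componentwise maxima of nonempty collections of elements of `S_α`. -/
def Pset (α : List ℕ) (n : ℕ) : Set (Fin n → ℕ) :=
  {σ | ∃ T : Finset (Fin n → ℕ), T.Nonempty ∧ (↑T : Set (Fin n → ℕ)) ⊆ Sset α n ∧ σ = T.sup id}

/-- The local moves (M.1): `0p ↦ p0` and (M.2'): `0p ↦ pp` for `p > 0`. -/
inductive GlideMove : List ℕ → List ℕ → Prop
  | m1 (u v : List ℕ) (p : ℕ) (hp : 0 < p) :
      GlideMove (u ++ 0 :: p :: v) (u ++ p :: 0 :: v)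
  | m2 (u v : List ℕ) (p : ℕ) (hp : 0 < p) :
      GlideMove (u ++ 0 :: p :: v) (u ++ p :: p :: v)

/-- `C_α`: strings obtainable from elements of `S_α` by iterated local moves. -/
def Cset (α : List ℕ) (n : ℕ) : Set (Fin n → ℕ) :=
  {σ | ∃ b ∈ Sset α n, Relation.ReflTransGen GlideMove (List.ofFn b) (List.ofFn σ)}

lemma pset_sup_mem (α : List ℕ) (n : ℕ) {σ τ : Fin n → ℕ}
    (hσ : σ ∈ Pset α n) (hτ : τ ∈ Pset α n) : σ ⊔ τ ∈ Pset α n := by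
  obtain ⟨T, hT, hTs, rfl⟩ := hσ
  obtain ⟨U, hU, hUs, rfl⟩ := hτ
  exact ⟨T ∪ U, Finset.Nonempty.mono Finset.subset_union_left hT,
    by push_cast; exact Set.union_subset hTs hUs, (Finset.sup_union).symm⟩

lemma pset_finite (α : List ℕ) (n : ℕ) : (Pset α n).Finite := by
  have hbound : Pset α n ⊆ Set.pi Set.univ (fun _ : Fin n => Set.Iic α.sum) := by
    rintro σ ⟨T, hT, hTs, rfl⟩ i -
    have hle : ∀ f ∈ T, f i ≤ α.sum := by
      intro f hf
      have hfS : posList (List.ofFn f) = α := hTs hf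
      by_cases h0 : f i = 0
      · simp [h0]
      · have hmem : f i ∈ α := by
          rw [← hfS]
          exact List.mem_filter.mpr ⟨List.mem_ofFn.mpr ⟨i, rfl⟩, by simpa using h0⟩
        exact List.single_le_sum (fun _ _ => Nat.zero_le _) _ hmem
    have : (T.sup id) i = T.sup (fun f => f i) := by
      rw [Finset.sup_apply]; rfl
    rw [Set.mem_Iic, this]
    exact Finset.sup_le hle
  exact Set.Finite.subset (Set.Finite.pi (fun _ => Set.finite_Iic _)) hbound


/-- The poset `P̂_α = P_α ∪ {0̂}` (with `P_α` ordered componentwise and a bottom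
element adjoined) is a lattice: every pair of elements has a join and a meet. -/
theorem stmt_4 (α : List ℕ) (hα : ∀ a ∈ α, 0 < a) (n : ℕ) (hn : α.length ≤ n) :
    (∀ a b : WithBot (Pset α n), ∃ s, IsLUB {a, b} s) ∧
    (∀ a b : WithBot (Pset α n), ∃ m, IsGLB {a, b} m) := by
  letI : SemilatticeSup ↥(Pset α n) :=
    Subtype.semilatticeSup (fun x y hx hy => pset_sup_mem α n hx hy)
  haveI : Fintype ↥(Pset α n) := (pset_finite α n).fintype
  haveI : Fintype (WithBot ↥(Pset α n)) := instFintypeOption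
  constructor
  · intro a b
    exact ⟨a ⊔ b, isLUB_pair⟩
  · intro a b
    refine ⟨(Finset.univ.filter (fun x : WithBot (Pset α n) => x ≤ a ∧ x ≤ b)).sup id, ?_, ?_⟩
    · intro c hc
      simp only [Set.mem_insert_iff, Set.mem_singleton_iff] at hc
      rcases hc with rfl | rfl
      · exact Finset.sup_le fun x hx => (Finset.mem_filter.mp hx).2.1
      · exact Finset.sup_le fun x hx => (Finset.mem_filter.mp hx).2.2
    · intro c hc
      have hca : c ≤ a := hc (Set.mem_insert _ _)
      have hcb : c ≤ b := hc (Set.mem_insert_of_mem _ rfl)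
      exact Finset.le_sup (f := id) (Finset.mem_filter.mpr ⟨Finset.mem_univ _, hca, hcb⟩)
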